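/- Let X = { (i,ℓ,s) : ℓ ∈ L, s ∈ S_ℓ, i ∈ I_ℓ } be partitioned into pairwise disjoint subsets X₁,…,X_K with union X, and fix 1 ≤ k ≤ K. In Model M_k, suppose every setup cost c^S_{ijℓ} is strictly positive, every setup time e_{ijℓ} is nonnegative, and all fixed values x̂^w_{iℓs} (w < k) are binary. Then for every subperiod s of a machine ℓ and products i, j ∈ I_ℓ such that both (i,ℓ,s−1) and (j,ℓ,s) belong to X₁ ∪ … ∪ X_k, every optimal solution of Model M_k satisfies y_{ijℓs} = max(0, x_{iℓ,s−1} + x_{jℓs} − 1) ∈ {0,1}; that is, the changeover variable y_{ijℓs} is guaranteed to assume a binary value at any optimum of Model M_k whenever both of the linked setup-state variables are fixed binary or constrained binary in Model M_k. -/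

import Mathlib

open Finset

/-- Data of Model M: the MILP for lot sizing and scheduling on unrelated
parallel machines (GLSPPL).  Products are `Fin n`, machines are `Fin m`,
periods are `Fin T`.  Machine `ℓ` has `W ℓ` subperiods; the subperiod
`s : Fin (W ℓ)` represents the paper's subperiod `s+1`, and `period ℓ s`
is the period `t` with `s ∈ S_{ℓ t}`; monotonicity of `period ℓ` expresses
that the blocks `S_{ℓ t}` are consecutive. -/
structure GLSP where
  n : ℕ
  m : ℕ
  T : ℕ
  W : Fin m → ℕ
  /-- `prods ℓ` is the set `I_ℓ` of products machine `ℓ` can produce. -/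
  prods : Fin m → Finset (Fin n)
  period : (ℓ : Fin m) → Fin (W ℓ) → Fin T
  periodMono : ∀ ℓ, Monotone (period ℓ)
  d : Fin n → Fin T → ℝ
  hcost : Fin n → ℝ
  g : Fin n → ℝ
  p : Fin n → Fin m → ℝ
  cP : Fin n → Fin m → ℝ
  qlb : Fin n → Fin m → ℝ
  e : Fin n → Fin n → Fin m → ℝ
  cS : Fin n → Fin n → Fin m → ℝ
  CW : ℝ
  cap : Fin m → Fin T → ℝ
  I0p : Fin n → ℝ
  I0m : Fin n → ℝ
  x0 : Fin n → Fin m → ℝ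
  d_nonneg : ∀ i t, 0 ≤ d i t
  hcost_nonneg : ∀ i, 0 ≤ hcost i
  g_nonneg : ∀ i, 0 ≤ g i
  p_nonneg : ∀ i ℓ, 0 ≤ p i ℓ
  cP_nonneg : ∀ i ℓ, 0 ≤ cP i ℓ
  qlb_nonneg : ∀ i ℓ, 0 ≤ qlb i ℓ
  CW_nonneg : 0 ≤ CW
  cap_nonneg : ∀ ℓ t, 0 ≤ cap ℓ t
  I0p_nonneg : ∀ i, 0 ≤ I0p i
  I0m_nonneg : ∀ i, 0 ≤ I0m i
  x0_binary : ∀ i ℓ, x0 i ℓ = 0 ∨ x0 i ℓ = 1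

/-- Variables of Model M.  `x i ℓ t` is the setup state `x_{iℓt}` for
`t = 0, 1, …, W ℓ` (`t = 0` is the initial state); the subperiod
`s : Fin (W ℓ)` corresponds to the paper's subperiod `s+1`, whose
setup state at its beginning is `x i ℓ s.val` and at its end is
`x i ℓ (s.val+1)`.  `Ip i t`/`Im i t` are inventory/backorder at
instant `t = 0, 1, …, T`. -/
structure Sol (P : GLSP) where
  q : Fin P.n → (ℓ : Fin P.m) → Fin (P.W ℓ) → ℝ
  x : Fin P.n → (ℓ : Fin P.m) → ℕ → ℝ
  y : Fin P.n → Fin P.n → (ℓ : Fin P.m) → Fin (P.W ℓ) → ℝ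
  Ip : Fin P.n → ℕ → ℝ
  Im : Fin P.n → ℕ → ℝ

/-- All constraints of Model M except the binary requirement on the
setup-state variables `x`. -/
def Feasible (P : GLSP) (σ : Sol P) : Prop :=
  -- initial conditions
  (∀ ℓ, ∀ i ∈ P.prods ℓ, σ.x i ℓ 0 = P.x0 i ℓ) ∧
  (∀ i, σ.Ip i 0 = P.I0p i) ∧
  (∀ i, σ.Im i 0 = P.I0m i) ∧
  -- inventory balance
  (∀ i, ∀ t : Fin P.T,
    σ.Ip i t.val - σ.Im i t.val
      + (∑ ℓ, ∑ s : Fin (P.W ℓ),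
          if i ∈ P.prods ℓ ∧ P.period ℓ s = t then σ.q i ℓ s else 0)
      - σ.Ip i (t.val + 1) + σ.Im i (t.val + 1) = P.d i t) ∧
  -- warehouse capacity
  (∀ t : Fin P.T, (∑ i, σ.Ip i (t.val + 1)) ≤ P.CW) ∧
  -- machine capacity
  (∀ ℓ, ∀ t : Fin P.T,
    (∑ i ∈ P.prods ℓ, ∑ s : Fin (P.W ℓ),
      if P.period ℓ s = t then
        P.p i ℓ * σ.q i ℓ s + ∑ j ∈ P.prods ℓ, P.e i j ℓ * σ.y i j ℓ s
      else 0) ≤ P.cap ℓ t) ∧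
  -- production linking
  (∀ ℓ, ∀ i ∈ P.prods ℓ, ∀ s : Fin (P.W ℓ),
    P.p i ℓ * σ.q i ℓ s ≤ P.cap ℓ (P.period ℓ s) * σ.x i ℓ (s.val + 1)) ∧
  -- minimum lot size
  (∀ ℓ, ∀ i ∈ P.prods ℓ, ∀ s : Fin (P.W ℓ),
    σ.q i ℓ s ≥ P.qlb i ℓ * (σ.x i ℓ (s.val + 1) - σ.x i ℓ s.val)) ∧
  -- unique setup state
  (∀ ℓ, ∀ s : Fin (P.W ℓ), (∑ i ∈ P.prods ℓ, σ.x i ℓ (s.val + 1)) = 1) ∧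
  -- changeover linking
  (∀ ℓ, ∀ s : Fin (P.W ℓ), ∀ i ∈ P.prods ℓ, ∀ j ∈ P.prods ℓ,
    σ.y i j ℓ s ≥ σ.x i ℓ s.val + σ.x j ℓ (s.val + 1) - 1) ∧
  -- nonnegativity
  (∀ ℓ, ∀ i ∈ P.prods ℓ, ∀ s : Fin (P.W ℓ), 0 ≤ σ.q i ℓ s) ∧
  (∀ ℓ, ∀ s : Fin (P.W ℓ), ∀ i ∈ P.prods ℓ, ∀ j ∈ P.prods ℓ, 0 ≤ σ.y i j ℓ s) ∧
  (∀ i, ∀ t : Fin P.T, 0 ≤ σ.Ip i (t.val + 1) ∧ 0 ≤ σ.Im i (t.val + 1))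

/-- The objective of Model M: inventory + backorder + setup + production cost. -/
def objective (P : GLSP) (σ : Sol P) : ℝ :=
  (∑ i, ∑ t : Fin P.T, P.hcost i * σ.Ip i (t.val + 1))
  + (∑ i, ∑ t : Fin P.T, P.g i * σ.Im i (t.val + 1))
  + (∑ ℓ, ∑ i ∈ P.prods ℓ, ∑ j ∈ P.prods ℓ, ∑ s : Fin (P.W ℓ),
      P.cS i j ℓ * σ.y i j ℓ s)
  + (∑ ℓ, ∑ i ∈ P.prods ℓ, ∑ s : Fin (P.W ℓ), P.cP i ℓ * σ.q i ℓ s)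

/-- The setup-state variables are binary (constraint (10) of Model M). -/
def BinaryX (P : GLSP) (σ : Sol P) : Prop :=
  ∀ ℓ, ∀ i ∈ P.prods ℓ, ∀ s : Fin (P.W ℓ),
    σ.x i ℓ (s.val + 1) = 0 ∨ σ.x i ℓ (s.val + 1) = 1

/-- Feasibility for Model M. -/
def FeasibleM (P : GLSP) (σ : Sol P) : Prop :=
  Feasible P σ ∧ BinaryX P σ

/-- Optimality for Model M. -/
def OptimalM (P : GLSP) (σ : Sol P) : Prop :=
  FeasibleM P σ ∧ ∀ τ, FeasibleM P τ → objective P σ ≤ objective P τ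

/-- Feasibility for the relax-and-fix subproblem Model M_k, where the index
set `X = {(i,ℓ,s) : ℓ ∈ L, s ∈ S_ℓ, i ∈ I_ℓ}` is partitioned into the subsets
`Xp 0, …, Xp (K-1)` (encoded as predicates `Xp k ℓ s i`), and `xhat w` carries
the given fixed values `x̂^w` for the indices in `X_w`, `w < k`: variables
with indices in `X_w` for `w < k` are fixed to `(xhat w).x`, variables with
indices in `X_k` are constrained binary, and variables with indices in `X_w`
for `w > k` are relaxed to `[0,1]`. -/
def FeasibleMk (P : GLSP) (K : ℕ)
    (Xp : Fin K → (ℓ : Fin P.m) → Fin (P.W ℓ) → Fin P.n → Prop)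
    (xhat : Fin K → Sol P) (k : Fin K) (σ : Sol P) : Prop :=
  Feasible P σ ∧
  (∀ w, w < k → ∀ ℓ, ∀ s : Fin (P.W ℓ), ∀ i ∈ P.prods ℓ, Xp w ℓ s i →
    σ.x i ℓ (s.val + 1) = (xhat w).x i ℓ (s.val + 1)) ∧
  (∀ ℓ, ∀ s : Fin (P.W ℓ), ∀ i ∈ P.prods ℓ, Xp k ℓ s i →
    (σ.x i ℓ (s.val + 1) = 0 ∨ σ.x i ℓ (s.val + 1) = 1)) ∧
  (∀ w, k < w → ∀ ℓ, ∀ s : Fin (P.W ℓ), ∀ i ∈ P.prods ℓ, Xp w ℓ s i →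
    0 ≤ σ.x i ℓ (s.val + 1) ∧ σ.x i ℓ (s.val + 1) ≤ 1)

/-- Optimality for the relax-and-fix subproblem Model M_k. -/
def OptimalMk (P : GLSP) (K : ℕ)
    (Xp : Fin K → (ℓ : Fin P.m) → Fin (P.W ℓ) → Fin P.n → Prop)
    (xhat : Fin K → Sol P) (k : Fin K) (σ : Sol P) : Prop :=
  FeasibleMk P K Xp xhat k σ ∧
  ∀ τ, FeasibleMk P K Xp xhat k τ → objective P σ ≤ objective P τ

/-- Let `X` be partitioned into pairwise disjoint subsets
`X₁, …, X_K` and fix `k`.  Suppose in Model M_k every setup cost `c^S_{ijℓ}`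
is strictly positive, every setup time `e_{ijℓ}` is nonnegative, and all the
fixed values `x̂^w` (`w < k`) are binary.  Then for every subperiod `s` of a
machine `ℓ` and products `i, j ∈ I_ℓ` such that both `(i,ℓ,s-1)` and
`(j,ℓ,s)` belong to `X₁ ∪ … ∪ X_k`, every optimal solution of Model M_k
satisfies `y_{ijℓs} = max 0 (x_{iℓ,s-1} + x_{jℓs} - 1) ∈ {0,1}`.
(Here the subperiod `s : Fin (P.W ℓ)` stands for the paper's subperiod
`s+1`, so `(i,ℓ,s-1)` is the pair formed with the preceding subperiod
`s' : Fin (P.W ℓ)` with `s' + 1 = s`.) -/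
theorem optimalMk_y_binary (P : GLSP) (K : ℕ)
    (Xp : Fin K → (ℓ : Fin P.m) → Fin (P.W ℓ) → Fin P.n → Prop)
    (hcover : ∀ ℓ, ∀ s : Fin (P.W ℓ), ∀ i ∈ P.prods ℓ, ∃ k, Xp k ℓ s i)
    (hdisj : ∀ k₁ k₂, k₁ ≠ k₂ → ∀ ℓ, ∀ s : Fin (P.W ℓ), ∀ i,
      ¬(Xp k₁ ℓ s i ∧ Xp k₂ ℓ s i))
    (k : Fin K) (xhat : Fin K → Sol P)
    (hbin : ∀ w, w < k → ∀ ℓ, ∀ s : Fin (P.W ℓ), ∀ i ∈ P.prods ℓ, Xp w ℓ s i →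
      ((xhat w).x i ℓ (s.val + 1) = 0 ∨ (xhat w).x i ℓ (s.val + 1) = 1))
    (hcS : ∀ ℓ, ∀ i ∈ P.prods ℓ, ∀ j ∈ P.prods ℓ, 0 < P.cS i j ℓ)
    (he : ∀ ℓ, ∀ i ∈ P.prods ℓ, ∀ j ∈ P.prods ℓ, 0 ≤ P.e i j ℓ)
    (ℓ : Fin P.m) (s : Fin (P.W ℓ))
    (i : Fin P.n) (hi : i ∈ P.prods ℓ) (j : Fin P.n) (hj : j ∈ P.prods ℓ)
    (hprev : ∃ s' : Fin (P.W ℓ), (s' : ℕ) + 1 = (s : ℕ) ∧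
      ∃ w, w ≤ k ∧ Xp w ℓ s' i)
    (hcur : ∃ w, w ≤ k ∧ Xp w ℓ s j)
    (σ : Sol P) (hopt : OptimalMk P K Xp xhat k σ) :
    σ.y i j ℓ s = max 0 (σ.x i ℓ s.val + σ.x j ℓ (s.val + 1) - 1) ∧
    (σ.y i j ℓ s = 0 ∨ σ.y i j ℓ s = 1) := by
  classical
  obtain ⟨⟨hF, hfix, hbink, hrel⟩, hopt2⟩ := hopt
  obtain ⟨hx0, hI0p, hI0m, hbal, hware, hcap, hlink, hmin, huniq, hchg, hqnn, hynn, hInn⟩ := hF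
  obtain ⟨s', hs', w, hw, hXw⟩ := hprev
  have hxi : σ.x i ℓ s.val = 0 ∨ σ.x i ℓ s.val = 1 := by
    rw [← hs']
    rcases lt_or_eq_of_le hw with h | h
    · rw [hfix w h ℓ s' i hi hXw]; exact hbin w h ℓ s' i hi hXw
    · subst h; exact hbink ℓ s' i hi hXw
  obtain ⟨w2, hw2, hXw2⟩ := hcur
  have hxj : σ.x j ℓ (s.val + 1) = 0 ∨ σ.x j ℓ (s.val + 1) = 1 := by
    rcases lt_or_eq_of_le hw2 with h | h
    · rw [hfix w2 h ℓ s j hj hXw2]; exact hbin w2 h ℓ s j hj hXw2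
    · subst h; exact hbink ℓ s j hj hXw2
  set M := max 0 (σ.x i ℓ s.val + σ.x j ℓ (s.val + 1) - 1) with hMdef
  have hMle : M ≤ σ.y i j ℓ s := max_le (hynn ℓ s i hi j hj) (hchg ℓ s i hi j hj)
  -- the modified solution
  set τ : Sol P := { σ with y := fun a b l t =>
    if a = i ∧ b = j ∧ l = ℓ ∧ (t : ℕ) = (s : ℕ) then M else σ.y a b l t } with hτdef
  have hys : τ.y i j ℓ s = M := by simp [hτdef]
  have hyle : ∀ a b (l : Fin P.m) (t : Fin (P.W l)), τ.y a b l t ≤ σ.y a b l t := by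
    intro a b l t
    simp only [hτdef]
    split_ifs with h
    · obtain ⟨rfl, rfl, rfl, ht⟩ := h
      have : t = s := Fin.ext ht
      subst this; exact hMle
    · exact le_refl _
  have hychg : ∀ (l : Fin P.m) (t : Fin (P.W l)), ∀ a ∈ P.prods l, ∀ b ∈ P.prods l,
      τ.y a b l t ≥ σ.x a l t.val + σ.x b l (t.val + 1) - 1 := by
    intro l t a ha b hb
    simp only [hτdef]
    split_ifs with h
    · obtain ⟨rfl, rfl, rfl, ht⟩ := h
      have : t = s := Fin.ext ht
      subst this
      exact le_max_right _ _
    · exact hchg l t a ha b hb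
  have hynn' : ∀ (l : Fin P.m) (t : Fin (P.W l)), ∀ a ∈ P.prods l, ∀ b ∈ P.prods l,
      0 ≤ τ.y a b l t := by
    intro l t a ha b hb
    simp only [hτdef]
    split_ifs with h
    · exact le_max_left _ _
    · exact hynn l t a ha b hb
  have hτfeas : FeasibleMk P K Xp xhat k τ := by
    refine ⟨⟨hx0, hI0p, hI0m, hbal, hware, ?_, hlink, hmin, huniq, ?_, hqnn, ?_, hInn⟩,
      hfix, hbink, hrel⟩
    · intro l t
      refine le_trans (Finset.sum_le_sum fun a ha => Finset.sum_le_sum fun u _ => ?_)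
        (hcap l t)
      split_ifs with hpt
      · exact add_le_add_right (Finset.sum_le_sum fun b hb =>
          mul_le_mul_of_nonneg_left (hyle a b l u) (he l a ha b hb)) _
      · exact le_refl _
    · intro l t a ha b hb
      exact hychg l t a ha b hb
    · intro l t a ha b hb
      exact hynn' l t a ha b hb
  -- optimality forces y = M
  have hyeq : σ.y i j ℓ s = M := by
    by_contra hne
    have hlt : M < σ.y i j ℓ s := lt_of_le_of_ne hMle (fun h => hne h.symm)
    have hS : (∑ l, ∑ a ∈ P.prods l, ∑ b ∈ P.prods l, ∑ t : Fin (P.W l),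
          P.cS a b l * τ.y a b l t)
        < ∑ l, ∑ a ∈ P.prods l, ∑ b ∈ P.prods l, ∑ t : Fin (P.W l),
          P.cS a b l * σ.y a b l t := by
      apply Finset.sum_lt_sum
      · intro l _
        refine Finset.sum_le_sum fun a ha => Finset.sum_le_sum fun b hb =>
          Finset.sum_le_sum fun t _ =>
            mul_le_mul_of_nonneg_left (hyle a b l t) (le_of_lt (hcS l a ha b hb))
      · refine ⟨ℓ, Finset.mem_univ ℓ, ?_⟩
        apply Finset.sum_lt_sum
        · intro a ha
          exact Finset.sum_le_sum fun b hb => Finset.sum_le_sum fun t _ =>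
            mul_le_mul_of_nonneg_left (hyle a b ℓ t) (le_of_lt (hcS ℓ a ha b hb))
        · refine ⟨i, hi, ?_⟩
          apply Finset.sum_lt_sum
          · intro b hb
            exact Finset.sum_le_sum fun t _ =>
              mul_le_mul_of_nonneg_left (hyle i b ℓ t) (le_of_lt (hcS ℓ i hi b hb))
          · refine ⟨j, hj, ?_⟩
            apply Finset.sum_lt_sum
            · intro t _
              exact mul_le_mul_of_nonneg_left (hyle i j ℓ t) (le_of_lt (hcS ℓ i hi j hj))
            · refine ⟨s, Finset.mem_univ s, ?_⟩
              rw [hys]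
              exact mul_lt_mul_of_pos_left hlt (hcS ℓ i hi j hj)
    have hobj : objective P τ < objective P σ := by
      unfold objective
      exact add_lt_add_left (add_lt_add_right hS _) _
    exact absurd (hopt2 τ hτfeas) (not_le.mpr hobj)
  refine ⟨hyeq, ?_⟩
  rw [hyeq, hMdef]
  rcases hxi with h1 | h1 <;> rcases hxj with h2 | h2 <;> rw [h1, h2] <;> norm_num
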